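/- arXiv:2305.19335 — 2 statements merged into one kernel-verified Lean document; each statement's English description precedes it below -/
import Mathlib

section
/- Let h : [n] → [n] be a Hessenberg function and w ∈ S_n with the property that w⁻¹(w(j)−1) ≤ h(j) for all j ∈ [n] (with convention w(0)=0, i.e., the condition is vacuous when w(j)=1). Set v := w₀·w. If k, ℓ ∈ [n] satisfy k ≥ h(ℓ) and v(k) > v(ℓ)+1, then (n+1−v(k)) + (v(ℓ)+1) ≤ n and v⁻¹(v(ℓ)+1) ≤ w⁻¹(n+1−v(k)). -/
/-- 0-indexed formulation on `Fin n`. Let h be a Hessenberg function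
(weakly increasing, h(i) ≥ i), and let w satisfy the S-fixed-point condition
w⁻¹(w(j)−1) ≤ h(j) for all j (vacuous when w(j) = 1 in 1-based terms).
Set v := w₀·w, so v(i) = Fin.rev (w i). If k ≥ h(ℓ) and v(k) > v(ℓ)+1, then
(n+1−v(k)) + (v(ℓ)+1) ≤ n and v⁻¹(v(ℓ)+1) ≤ w⁻¹(n+1−v(k)) (in 1-based terms);
here n+1−v(k) corresponds to `Fin.rev (v k)` and arithmetic on values is via ℕ. -/
theorem not_in_Dw {n : ℕ} (h : Fin n → Fin n) (w : Equiv.Perm (Fin n))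
    (hgeq : ∀ i : Fin n, (i : ℕ) ≤ (h i : ℕ))
    (hmono : ∀ i j : Fin n, i ≤ j → h i ≤ h j)
    (hfix : ∀ j : Fin n, 1 ≤ (w j : ℕ) → ∀ b : Fin n,
      (b : ℕ) = (w j : ℕ) - 1 → (w⁻¹ b : ℕ) ≤ (h j : ℕ))
    (k ℓ : Fin n)
    (hk : (h ℓ : ℕ) ≤ (k : ℕ)) :
    let v : Equiv.Perm (Fin n) := (Fin.revPerm : Equiv.Perm (Fin n)) * w
    ((v ℓ : ℕ) + 1 < (v k : ℕ)) →
      ((n - (v k : ℕ)) + ((v ℓ : ℕ) + 2) ≤ n ∧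
       ∀ a : Fin n, (a : ℕ) = (v ℓ : ℕ) + 1 →
         (v⁻¹ a : ℕ) ≤ (w⁻¹ (Fin.rev (v k)) : ℕ)) := by
  intro v hlt
  have hvk : (v k : ℕ) = n - ((w k : ℕ) + 1) := by
    simp [v, Fin.rev]
  have hvl : (v ℓ : ℕ) = n - ((w ℓ : ℕ) + 1) := by
    simp [v, Fin.rev]
  have hwk := (w k).isLt
  have hwl := (w ℓ).isLt
  constructor
  · omega
  · intro a ha
    -- rev (v k) = w k
    have hrev : Fin.rev (v k) = w k := by
      simp [v]
    rw [hrev, (by exact Equiv.symm_apply_apply w k : w⁻¹ (w k) = k)]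
    -- v⁻¹ a = w⁻¹ (rev a)
    have hvinv : (v⁻¹ a : ℕ) = (w⁻¹ (Fin.rev a) : ℕ) := rfl
    rw [hvinv]
    have hw1 : 1 ≤ (w ℓ : ℕ) := by omega
    have hreva : (Fin.rev a : ℕ) = (w ℓ : ℕ) - 1 := by
      rw [Fin.val_rev]; omega
    calc (w⁻¹ (Fin.rev a) : ℕ) ≤ (h ℓ : ℕ) := hfix ℓ hw1 _ hreva
      _ ≤ (k : ℕ) := hk
end

section
/- Let N be the n×n regular nilpotent Jordan block (N_{i,i+1} = 1, all other entries 0), and let M be an n×n lower triangular matrix over a field with 1's on the diagonal. If w₀(i) = n+1−i and P = P_{w₀}M, then the matrix F = P⁻¹NP is strictly lower triangular except that its subdiagonal entries F_{i+1,i} include entries equal to 1 when indices permit; in particular F_{k,ℓ} = 0 for all k ≤ ℓ, and F_{ℓ+1,ℓ} = 1 for all ℓ ≤ n−1. -/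
/-- Permutation matrix with column convention: the j-th column is e_{w(j)}. -/
def permMat {n : ℕ} (K : Type*) [Field K] (w : Equiv.Perm (Fin n)) :
    Matrix (Fin n) (Fin n) K :=
  fun i j => if i = w j then 1 else 0

/-- with N the regular nilpotent Jordan block, M lower unitriangular,
P := P_{w₀}·M (w₀ the longest permutation, 0-indexed `Fin.revPerm`), and
F := P⁻¹·N·P, we have F_{k,ℓ} = 0 whenever k ≤ ℓ, and F_{ℓ+1,ℓ} = 1. -/
theorem conjugated_nilpotent_entries {n : ℕ} (K : Type*) [Field K]
    (M : Matrix (Fin n) (Fin n) K)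
    (hdiag : ∀ i, M i i = 1)
    (hlow : ∀ i j : Fin n, i < j → M i j = 0)
    (N : Matrix (Fin n) (Fin n) K)
    (hN : ∀ i j : Fin n, N i j = if (j : ℕ) = (i : ℕ) + 1 then 1 else 0) :
    let P := permMat K (Fin.revPerm : Equiv.Perm (Fin n)) * M
    let F := P⁻¹ * N * P
    (∀ k ℓ : Fin n, k ≤ ℓ → F k ℓ = 0) ∧
    (∀ k ℓ : Fin n, (k : ℕ) = (ℓ : ℕ) + 1 → F k ℓ = 1) := by
  intro P F
  set Q := permMat K (Fin.revPerm : Equiv.Perm (Fin n)) with hQdef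
  -- basic facts about Q
  have hQapp : ∀ i j : Fin n, Q i j = if j = Fin.revPerm i then 1 else 0 := by
    intro i j
    simp only [hQdef, permMat]
    congr 1
    simp only [eq_iff_iff]
    constructor
    · intro h; rw [h]; simp
    · intro h; rw [h]; simp
  have hQQ : Q * Q = 1 := by
    ext i j
    rw [Matrix.mul_apply]
    simp only [hQapp]
    rw [Finset.sum_eq_single (Fin.revPerm j)]
    · by_cases h : i = j
      · subst h; simp
      · have h2 : ¬ (Fin.revPerm j = Fin.revPerm i) := by
          intro hc; exact h (Fin.revPerm.injective hc).symm
        simp [h2, Matrix.one_apply, h, Ne.symm h]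
    · intro b _ hb
      have hz : ¬ (j = Fin.revPerm b) := by
        intro hc
        apply hb
        apply Fin.ext
        have h1 := congrArg Fin.val hc
        simp [Fin.val_rev] at h1 ⊢
        omega
      rw [if_neg hz, mul_zero]
    · intro h; exact absurd (Finset.mem_univ _) h
  have hQinv : Q⁻¹ = Q := Matrix.inv_eq_right_inv hQQ
  -- triangularity facts about M and M⁻¹
  have hbt : M.BlockTriangular OrderDual.toDual := fun i j h => hlow i j h
  have hdet : M.det = 1 := by
    rw [Matrix.det_of_lowerTriangular M hbt]; simp [hdiag]
  have : Invertible M := M.invertibleOfIsUnitDet (by simp [hdet])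
  have hinvbt := Matrix.blockTriangular_inv_of_blockTriangular hbt
  set L := M⁻¹ with hLdef
  have hLlow : ∀ i j : Fin n, i < j → L i j = 0 := fun i j h => hinvbt h
  have hLM : L * M = 1 := Matrix.inv_mul_of_invertible M
  have hLdiag : ∀ i : Fin n, L i i = 1 := by
    intro i
    have h1 : (L * M) i i = 1 := by rw [hLM]; simp
    rw [Matrix.mul_apply] at h1
    rw [Finset.sum_eq_single i] at h1
    · rw [hdiag i, mul_one] at h1; exact h1
    · intro a _ ha
      rcases lt_or_gt_of_ne ha with h | h
      · rw [hlow a i h, mul_zero]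
      · rw [hLlow i a h, zero_mul]
    · intro h; exact absurd (Finset.mem_univ _) h
  -- the conjugate of N by Q is the transposed Jordan block
  set N' := Q * N * Q with hN'def
  have hN' : ∀ i j : Fin n, N' i j = if (i : ℕ) = (j : ℕ) + 1 then 1 else 0 := by
    intro i j
    have h1 : N' i j = (Q * N) i (Fin.revPerm j) := by
      rw [hN'def, Matrix.mul_apply]
      rw [Finset.sum_eq_single (Fin.revPerm j)]
      · rw [hQapp]; simp
      · intro b _ hb
        have hz : Q b j = 0 := by
          rw [hQapp]
          apply if_neg
          intro hc
          apply hb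
          apply Fin.ext
          have h1 := congrArg Fin.val hc
          simp [Fin.val_rev] at h1 ⊢
          omega
        rw [hz, mul_zero]
      · intro h; exact absurd (Finset.mem_univ _) h
    have h2 : (Q * N) i (Fin.revPerm j) = N (Fin.revPerm i) (Fin.revPerm j) := by
      rw [Matrix.mul_apply]
      rw [Finset.sum_eq_single (Fin.revPerm i)]
      · rw [hQapp]; simp
      · intro b _ hb; rw [hQapp, if_neg hb, zero_mul]
      · intro h; exact absurd (Finset.mem_univ _) h
    rw [h1, h2, hN]
    have hi := i.isLt
    have hj := j.isLt
    have : ((Fin.revPerm j : Fin n) : ℕ) = ((Fin.revPerm i : Fin n) : ℕ) + 1 ↔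
        (i : ℕ) = (j : ℕ) + 1 := by
      simp only [Fin.revPerm_apply, Fin.val_rev]
      omega
    simp only [this]
  -- rewrite F
  have hF : F = L * (N' * M) := by
    show P⁻¹ * N * P = _
    show (Q * M)⁻¹ * N * (Q * M) = _
    rw [Matrix.mul_inv_rev, hQinv, hN'def]
    try simp only [Matrix.mul_assoc]
    rfl
  have hFapp : ∀ k ℓ : Fin n, F k ℓ = ∑ a, L k a * ∑ b, N' a b * M b ℓ := by
    intro k ℓ
    rw [hF]
    simp only [Matrix.mul_apply]
  constructor
  · intro k ℓ hkl
    rw [hFapp]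
    apply Finset.sum_eq_zero
    intro a _
    by_cases hka : k < a
    · rw [hLlow k a hka, zero_mul]
    · push_neg at hka
      have haℓ : a ≤ ℓ := le_trans hka hkl
      have : (∑ b, N' a b * M b ℓ) = 0 := by
        apply Finset.sum_eq_zero
        intro b _
        by_cases hab : (a : ℕ) = (b : ℕ) + 1
        · have hbℓ : b < ℓ := by
            have := haℓ
            rw [Fin.le_def] at this
            rw [Fin.lt_def]; omega
          rw [hlow b ℓ hbℓ, mul_zero]
        · rw [hN', if_neg hab, zero_mul]
      rw [this, mul_zero]
  · intro k ℓ hkℓ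
    rw [hFapp]
    rw [Finset.sum_eq_single k]
    · rw [hLdiag k, one_mul]
      rw [Finset.sum_eq_single ℓ]
      · rw [hN' k ℓ, if_pos hkℓ, one_mul, hdiag ℓ]
      · intro b _ hb
        have : ¬ ((k : ℕ) = (b : ℕ) + 1) := by
          intro hc
          apply hb
          apply Fin.ext
          omega
        rw [hN', if_neg this, zero_mul]
      · intro h; exact absurd (Finset.mem_univ _) h
    · intro a _ ha
      rcases lt_or_gt_of_ne ha with h | h
      · -- a < k, so a ≤ ℓ; inner sum vanishes
        have haℓ : (a : ℕ) ≤ (ℓ : ℕ) := by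
          rw [Fin.lt_def] at h; omega
        have : (∑ b, N' a b * M b ℓ) = 0 := by
          apply Finset.sum_eq_zero
          intro b _
          by_cases hab : (a : ℕ) = (b : ℕ) + 1
          · have hbℓ : b < ℓ := by rw [Fin.lt_def]; omega
            rw [hlow b ℓ hbℓ, mul_zero]
          · rw [hN', if_neg hab, zero_mul]
        rw [this, mul_zero]
      · rw [hLlow k a h, zero_mul]
    · intro h; exact absurd (Finset.mem_univ _) h
end
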